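/- Let ℋ_{λ,μ} be a C² Hamiltonian on 𝒟₁ = 𝕋^n × B₁ of the form ℋ_{λ,μ}(θ,I) = ℋ_λ(θ₂,I) + μF(θ,I), where ℋ_λ(θ₂,I) = ε^{-1/2} ϖ·I₁ + A I₁·I₁ + B I₂·I₂ + V(θ₂) + λR(θ₂,I), with |F|₂ ≤ C₀, |R|₂ ≤ C₀, |V|₂ ≤ 1, B a definite symmetric matrix and V having a nondegenerate maximum. Suppose that for parameters 0 ≤ λ ≤ λ₀ and 0 ≤ μ ≤ c₀λ there are open sets U± ⊆ 𝕋^n and C² functions S±_{λ,μ} : U± → ℝ, generating functions of the stable and unstable manifolds, such that: (i) the Lagrangian graphs {(θ, ∂_θ S±_{λ,μ}(θ)) : θ ∈ U±} are invariant under the Hamiltonian flow of ℋ_{λ,μ}, equivalently θ ↦ ℋ_{λ,μ}(θ, ∂_θ S±_{λ,μ}(θ)) is constant on U±; (ii) for μ = 0 the graphs lie in {I₁ = 0}, i.e. ∂_{θ₁} S±_{λ,0} ≡ 0; (iii) |∂_θ S±_{λ,μ} − ∂_θ S±_{λ,0}|_{C¹(U±)} ≤ C₀ μ; and (iv) there is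 a homoclinic point θ_{λ,μ} ∈ U⁺ ∩ U⁻ with ∂_θ S⁺_{λ,μ}(θ_{λ,μ}) = ∂_θ S⁻_{λ,μ}(θ_{λ,μ}). Then there exists a constant C, depending only on n, d and C₀, such that at least d of the eigenvalues a₁, …, a_n (the splitting angles) of the splitting matrix M = ∂²_θ(S⁺_{λ,μ} − S⁻_{λ,μ})(θ_{λ,μ}) satisfy |a_i| ≤ C μ. -/

import Mathlib

open scoped BigOperators Topology
open Filter Set

namespace NFpaper

/-- Phase space `ℝ^n × ℝ^n`; the first factor is the universal cover of `𝕋^n`. -/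
abbrev Phase (n : ℕ) := (Fin n → ℝ) × (Fin n → ℝ)

/-- The domain `𝒟_R = 𝕋^n × B_R` (described via lifts: no condition on the angles). -/
def Dom (n : ℕ) (R : ℝ) : Set (Phase n) := {p | ‖p.2‖ ≤ R}

/-- Closed ball `B_R` in the action space, for the sup norm. -/
def Ball (n : ℕ) (R : ℝ) : Set (Fin n → ℝ) := {I | ‖I‖ ≤ R}

/-- `f` is the lift of a function on `𝕋^n × ℝ^n`. -/
def PeriodicTheta {n : ℕ} (f : Phase n → ℝ) : Prop :=
  ∀ (m : Fin n → ℤ) (θ I : Fin n → ℝ), f (θ + (fun i => (m i : ℝ)), I) = f (θ, I)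

/-- `f` is the lift of a function on `𝕋^n`. -/
def PeriodicThetaV {n : ℕ} (f : (Fin n → ℝ) → ℝ) : Prop :=
  ∀ (m : Fin n → ℤ) (θ : Fin n → ℝ), f (θ + (fun i => (m i : ℝ))) = f θ

/-- `Φ` is the lift of a map of `𝕋^n × ℝ^n` to itself. -/
def PeriodicMap {n : ℕ} (Φ : Phase n → Phase n) : Prop :=
  ∀ (m : Fin n → ℤ) (θ I : Fin n → ℝ),
    Φ (θ + (fun i => (m i : ℝ)), I) =
      ((Φ (θ, I)).1 + (fun i => (m i : ℝ)), (Φ (θ, I)).2)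

/-- The linear Hamiltonian `l_ω (θ, I) = ω · I`. -/
def lin {n : ℕ} (ω : Fin n → ℝ) : Phase n → ℝ := fun p => ∑ i, ω i * p.2 i

/-- The Hamiltonian flow `X^t_w` of `l_w`. -/
def linFlow {n : ℕ} (w : Fin n → ℝ) (t : ℝ) (x : Phase n) : Phase n := (x.1 + t • w, x.2)

/-- The time average `[g]_w` along the linear flow with frequency `w`. -/
noncomputable def timeAvg {n : ℕ} (w : Fin n → ℝ) (g : Phase n → ℝ) (x : Phase n) : ℝ :=
  limUnder atTop (fun s : ℝ => (1 / s) * ∫ t in (0:ℝ)..s, g (linFlow w t x))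

/-- Iterated averages `[⋯[[g]_{v 0}]_{v 1}⋯]_{v (j-1)}`. -/
noncomputable def iterAvg {n : ℕ} :
    ∀ j : ℕ, (Fin j → (Fin n → ℝ)) → (Phase n → ℝ) → (Phase n → ℝ)
  | 0, _, g => g
  | (j+1), v, g => timeAvg (v (Fin.last j)) (iterAvg j (fun i => v i.castSucc) g)

/-- Poisson bracket, with derivatives taken within `s`. -/
noncomputable def pb {n : ℕ} (s : Set (Phase n)) (f g : Phase n → ℝ) (x : Phase n) : ℝ :=
  ∑ j : Fin n,
    (fderivWithin ℝ f s x ((0 : Fin n → ℝ), (Pi.single j 1 : Fin n → ℝ)) *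
        fderivWithin ℝ g s x ((Pi.single j 1 : Fin n → ℝ), (0 : Fin n → ℝ))
      - fderivWithin ℝ f s x ((Pi.single j 1 : Fin n → ℝ), (0 : Fin n → ℝ)) *
        fderivWithin ℝ g s x ((0 : Fin n → ℝ), (Pi.single j 1 : Fin n → ℝ)))

/-- The canonical symplectic form on `ℝ^n × ℝ^n`. -/
def symp {n : ℕ} (u v : Phase n) : ℝ := ∑ j, (u.2 j * v.1 j - u.1 j * v.2 j)

/-- `Φ` is symplectic on `s`: its differential preserves the canonical symplectic form. -/
def SymplecticOn {n : ℕ} (Φ : Phase n → Phase n) (s : Set (Phase n)) : Prop :=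
  ∀ x ∈ s, ∀ u v : Phase n,
    symp (fderivWithin ℝ Φ s x u) (fderivWithin ℝ Φ s x v) = symp u v

/-- The Hamiltonian vector field `X_H = (∂_I H, -∂_θ H)` (derivatives within `s`). -/
noncomputable def hamVF {n : ℕ} (s : Set (Phase n)) (H : Phase n → ℝ) (x : Phase n) : Phase n :=
  ((fun j => fderivWithin ℝ H s x ((0 : Fin n → ℝ), (Pi.single j 1 : Fin n → ℝ))),
   (fun j => -fderivWithin ℝ H s x ((Pi.single j 1 : Fin n → ℝ), (0 : Fin n → ℝ))))

/-- Vectors with integer components. -/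
def IsIntVec {n : ℕ} (x : Fin n → ℝ) : Prop := ∀ i, ∃ z : ℤ, x i = z

/-- Rational subspaces: subspaces spanned by integer vectors. -/
def IsRationalSub {n : ℕ} (V : Submodule ℝ (Fin n → ℝ)) : Prop :=
  ∃ S : Set (Fin n → ℝ), (∀ v ∈ S, IsIntVec v) ∧ V = Submodule.span ℝ S

/-- `F_ω`: the smallest rational subspace containing `ω`. -/
noncomputable def Fspace {n : ℕ} (ω : Fin n → ℝ) : Submodule ℝ (Fin n → ℝ) :=
  sInf {V | IsRationalSub V ∧ ω ∈ V}

/-- `v` is a `T`-periodic vector. -/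
def IsPeriodic {n : ℕ} (v : Fin n → ℝ) (T : ℝ) : Prop :=
  v ≠ 0 ∧ 0 < T ∧ IsIntVec (T • v) ∧ ∀ t : ℝ, 0 < t → IsIntVec (t • v) → T ≤ t

/-- The constant `Q_ω`. -/
noncomputable def Qmin {n : ℕ} (ω : Fin n → ℝ) : ℝ :=
  sInf {Q : ℝ | ∃ z : Fin n → ℤ, z ≠ 0 ∧ ((fun i => (z i : ℝ)) : Fin n → ℝ) ∈ Fspace ω ∧
    ‖((fun i => (z i : ℝ)) : Fin n → ℝ)‖ ≤ Q}

/-- The function `Ψ_ω`. -/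
noncomputable def Psi {n : ℕ} (ω : Fin n → ℝ) (Q : ℝ) : ℝ :=
  sSup {y : ℝ | ∃ z : Fin n → ℤ, z ≠ 0 ∧ ((fun i => (z i : ℝ)) : Fin n → ℝ) ∈ Fspace ω ∧
    ‖((fun i => (z i : ℝ)) : Fin n → ℝ)‖ ≤ Q ∧ y = |∑ i, (z i : ℝ) * ω i|⁻¹}

/-- The function `Δ_ω`. -/
noncomputable def Delta {n : ℕ} (ω : Fin n → ℝ) (Q : ℝ) : ℝ := Q * Psi ω Q

/-- The function `Δ*_ω`. -/
noncomputable def DeltaStar {n : ℕ} (ω : Fin n → ℝ) (x : ℝ) : ℝ :=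
  sSup {Q : ℝ | Qmin ω ≤ Q ∧ Delta ω Q ≤ x}

/-- The set of Diophantine vectors `Ω_d(γ, τ)`. -/
def Dio {n : ℕ} (d : ℕ) (γ τ : ℝ) (ω : Fin n → ℝ) : Prop :=
  Module.finrank ℝ (Fspace ω) = d ∧ ∀ Q : ℝ, Qmin ω ≤ Q → Psi ω Q ≤ γ⁻¹ * Q ^ τ

/-- The orthogonal projection `Π_F` onto `F = F_ω` for the Euclidean scalar product. -/
noncomputable def projF {n : ℕ} (ω : Fin n → ℝ) (x : Fin n → ℝ) : Fin n → ℝ :=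
  EuclideanSpace.equiv (Fin n) ℝ
    ((Submodule.orthogonalProjectionOnto
        ((Fspace ω).map ((EuclideanSpace.equiv (Fin n) ℝ).symm.toLinearEquiv.toLinearMap))
        ((EuclideanSpace.equiv (Fin n) ℝ).symm x) : EuclideanSpace ℝ (Fin n)))

/-- All derivatives of order `≤ k` of `f` are bounded by `M` on `s`. -/
def DerivBoundsOn {E F : Type*} [NormedAddCommGroup E] [NormedSpace ℝ E]
    [NormedAddCommGroup F] [NormedSpace ℝ F]
    (k : ℕ) (f : E → F) (s : Set E) (M : ℝ) : Prop :=
  ∀ i : ℕ, i ≤ k → ∀ x ∈ s, ‖iteratedFDerivWithin ℝ i f s x‖ ≤ M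

/-- `f` is of class `C^k` on `s` with `|f|_{C^k(s)} ≤ M`. -/
def CkNormLE {E F : Type*} [NormedAddCommGroup E] [NormedSpace ℝ E]
    [NormedAddCommGroup F] [NormedSpace ℝ F]
    (k : ℕ) (f : E → F) (s : Set E) (M : ℝ) : Prop :=
  ContDiffOn ℝ k f s ∧ DerivBoundsOn k f s M

/-- The family of directions `(e_{u 0}, 0), …, (0, e_{w (q-1)})` encoding the
partial derivative `∂_θ^{l₁} ∂_I^{l₂}` with `|l₁| = p`, `|l₂| = q`. -/
def mixedDirs (n : ℕ) {p q : ℕ} (u : Fin p → Fin n) (w : Fin q → Fin n) :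
    Fin (p + q) → Phase n :=
  fun i =>
    if h : (i : ℕ) < p then ((Pi.single (u ⟨i, h⟩) 1 : Fin n → ℝ), (0 : Fin n → ℝ))
    else ((0 : Fin n → ℝ),
      (Pi.single (w ⟨(i : ℕ) - p, by have := i.isLt; omega⟩) 1 : Fin n → ℝ))

/-- The gradient `∂_θ S` of a function of the angles. -/
noncomputable def gradV {N : ℕ} (S : (Fin N → ℝ) → ℝ) (θ : Fin N → ℝ) : Fin N → ℝ :=
  fun j => fderiv ℝ S θ (Pi.single j 1)

/-- The splitting matrix `∂²_θ (S⁺ - S⁻) (θ₀)`. -/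
noncomputable def splitMat {N : ℕ} (Sp Sm : (Fin N → ℝ) → ℝ) (θ₀ : Fin N → ℝ) :
    Matrix (Fin N) (Fin N) ℝ :=
  fun i j => fderiv ℝ (fun θ => gradV (fun θ' => Sp θ' - Sm θ') θ j) θ₀ (Pi.single i 1)

end NFpaper
namespace NFpaper

/-- The Hamiltonian `ℋ_{λ,μ}(θ,I) = ε^{-1/2} ϖ·I₁ + A I₁·I₁ + B I₂·I₂ + V(θ₂)
    + λ R(θ₂,I) + μ F(θ,I)` on `𝒟₁ = 𝕋^{d+m} × B₁`. -/
noncomputable def hamSplit (d m : ℕ) (ε : ℝ) (ϖ : Fin d → ℝ)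
    (A : Matrix (Fin d) (Fin d) ℝ) (B : Matrix (Fin m) (Fin m) ℝ)
    (V : (Fin m → ℝ) → ℝ) (Rp Fp : Phase (d + m) → ℝ) (lam mu : ℝ) :
    Phase (d + m) → ℝ :=
  fun x =>
    (Real.sqrt ε)⁻¹ * (∑ i : Fin d, ϖ i * x.2 (Fin.castAdd m i))
    + (∑ i : Fin d, ∑ j : Fin d, A i j * x.2 (Fin.castAdd m i) * x.2 (Fin.castAdd m j))
    + (∑ i : Fin m, ∑ j : Fin m, B i j * x.2 (Fin.natAdd d i) * x.2 (Fin.natAdd d j))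
    + V (fun i => x.1 (Fin.natAdd d i))
    + lam * Rp x + mu * Fp x

section Aux

private lemma euclid_norm_sq {n : ℕ} (x : EuclideanSpace ℝ (Fin n)) :
    ‖x‖ ^ 2 = ∑ i, (x i) ^ 2 := by
  rw [EuclideanSpace.norm_eq, Real.sq_sqrt (by positivity)]
  simp [Real.norm_eq_abs, sq_abs]

private lemma abs_coord_le_norm {n : ℕ} (x : EuclideanSpace ℝ (Fin n)) (j : Fin n) :
    |x j| ≤ ‖x‖ := by
  have h1 : (x j) ^ 2 ≤ ‖x‖ ^ 2 := by
    rw [euclid_norm_sq]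
    exact Finset.single_le_sum (f := fun i => (x i) ^ 2) (fun i _ => sq_nonneg _)
      (Finset.mem_univ j)
  calc |x j| = Real.sqrt ((x j) ^ 2) := (Real.sqrt_sq_eq_abs _).symm
    _ ≤ Real.sqrt (‖x‖ ^ 2) := Real.sqrt_le_sqrt h1
    _ = ‖x‖ := Real.sqrt_sq (norm_nonneg x)

private lemma parseval {n : ℕ} (b : OrthonormalBasis (Fin n) ℝ (EuclideanSpace ℝ (Fin n)))
    (x : EuclideanSpace ℝ (Fin n)) :
    ‖x‖ ^ 2 = ∑ k, (inner ℝ (b k) x : ℝ) ^ 2 := by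
  have h := b.repr.norm_map x
  rw [← h, euclid_norm_sq]
  exact Finset.sum_congr rfl fun k _ => by rw [b.repr_apply_apply]

private lemma sum_sq_lt {n : ℕ} (a c : Fin n → ℝ) (T : ℝ) (hT : 0 ≤ T)
    (K : Finset (Fin n)) (hsupp : ∀ k ∉ K, c k = 0) (hbig : ∀ k ∈ K, T < |a k|)
    (k₀ : Fin n) (hk₀ : c k₀ ≠ 0) :
    T ^ 2 * (∑ k, (c k) ^ 2) < ∑ k, (a k * c k) ^ 2 := by
  have hk₀K : k₀ ∈ K := by
    by_contra h
    exact hk₀ (hsupp _ h)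
  rw [Finset.mul_sum]
  apply Finset.sum_lt_sum
  · intro k _
    by_cases hk : k ∈ K
    · have h1 : T < |a k| := hbig k hk
      have h2 : T ^ 2 ≤ (a k) ^ 2 := by nlinarith [abs_nonneg (a k), sq_abs (a k)]
      nlinarith [sq_nonneg (c k)]
    · simp [hsupp k hk]
  · refine ⟨k₀, Finset.mem_univ _, ?_⟩
    have h1 : T < |a k₀| := hbig k₀ hk₀K
    have h3 : 0 < |c k₀| := abs_pos.mpr hk₀
    have h2 : 0 < (c k₀) ^ 2 := by nlinarith [sq_abs (c k₀)]
    have h4 : T ^ 2 < (a k₀) ^ 2 := by nlinarith [sq_abs (a k₀), abs_nonneg (a k₀)]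
    have h5 := mul_lt_mul_of_pos_right h4 h2
    nlinarith [h5]

/-- A real symmetric matrix of size `d+m` whose columns indexed by the first block of
coordinates have entries bounded by `δ` has at least `d` eigenvalues bounded by
`(d+m)*d*δ`, together with linearly independent eigenvectors. -/
private lemma exists_small_eigen {d m : ℕ} (hd : 1 ≤ d)
    (M : Matrix (Fin (d + m)) (Fin (d + m)) ℝ) (δ : ℝ) (hδ : 0 ≤ δ)
    (hsym : ∀ i j, M i j = M j i)
    (hcol : ∀ i (k : Fin d), |M i (Fin.castAdd m k)| ≤ δ) :
    ∃ (v : Fin d → (Fin (d + m) → ℝ)) (a : Fin d → ℝ),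
      LinearIndependent ℝ v ∧ (∀ i, M.mulVec (v i) = a i • v i) ∧
      ∀ i, |a i| ≤ ((d : ℝ) + m) * d * δ := by
  classical
  have hH : M.IsHermitian := by
    ext i j
    simpa [Matrix.conjTranspose_apply] using hsym j i
  have hMT : M.transpose = M := by
    ext i j; exact hsym j i
  set u := hH.eigenvectorBasis with hu
  set a := hH.eigenvalues with ha
  set T : ℝ := ((d : ℝ) + m) * d * δ with hT
  have hT0 : 0 ≤ T := by positivity
  set K : Finset (Fin (d + m)) := Finset.univ.filter (fun k => T < |a k|) with hK
  -- dot products with eigenvectors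
  have hdot : ∀ (k : Fin (d + m)) (x : EuclideanSpace ℝ (Fin (d + m))),
      (inner ℝ (u k) x : ℝ) = dotProduct (fun i => u k i) (fun i => x i) := by
    intro k x
    simp [PiLp.inner_apply, RCLike.inner_apply, conj_trivial, dotProduct, mul_comm]
  -- the key cardinality bound
  have hcard : K.card ≤ m := by
    by_contra hlt
    push_neg at hlt
    -- the two subspaces
    set E : Submodule ℝ (EuclideanSpace ℝ (Fin (d + m))) :=
      Submodule.span ℝ ((⇑u) '' (K : Set (Fin (d + m)))) with hE
    set bF : Fin d → EuclideanSpace ℝ (Fin (d + m)) :=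
      fun k => EuclideanSpace.single (Fin.castAdd m k) (1 : ℝ) with hbF
    set F : Submodule ℝ (EuclideanSpace ℝ (Fin (d + m))) :=
      Submodule.span ℝ (Set.range bF) with hF
    have hEcard : Module.finrank ℝ E = K.card := by
      have hli : LinearIndependent ℝ (fun k : (K : Set (Fin (d + m))) => u (k : Fin (d + m))) :=
        u.orthonormal.linearIndependent.comp _ Subtype.val_injective
      have hr : Set.range (fun k : (K : Set (Fin (d + m))) => u (k : Fin (d + m)))
          = (⇑u) '' (K : Set (Fin (d + m))) := by
        ext x
        simp [Set.mem_image]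
      have h2 := finrank_span_eq_card hli
      rw [hr] at h2
      rw [hE, h2]
      simp
    have hFcard : Module.finrank ℝ F = d := by
      have hbf : bF = fun k => EuclideanSpace.basisFun (Fin (d + m)) ℝ (Fin.castAdd m k) := by
        funext k
        rw [hbF, EuclideanSpace.basisFun_apply]
      have hli : LinearIndependent ℝ bF := by
        rw [hbf]
        exact (EuclideanSpace.basisFun (Fin (d + m)) ℝ).orthonormal.linearIndependent.comp
          (Fin.castAdd m) (Fin.castAdd_injective d m)
      have h2 := finrank_span_eq_card hli
      rw [hF, h2, Fintype.card_fin]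
    have hsup : Module.finrank ℝ ↥(E ⊔ F) ≤ d + m := by
      have := Submodule.finrank_le (E ⊔ F)
      rwa [finrank_euclideanSpace_fin] at this
    have hdim := Submodule.finrank_sup_add_finrank_inf_eq E F
    rw [hEcard, hFcard] at hdim
    have hinfpos : 0 < Module.finrank ℝ ↥(E ⊓ F) := by omega
    have : Nontrivial ↥(E ⊓ F) := Module.finrank_pos_iff.mp hinfpos
    obtain ⟨x, hx0⟩ := exists_ne (0 : ↥(E ⊓ F))
    set xv : EuclideanSpace ℝ (Fin (d + m)) := (x : EuclideanSpace ℝ (Fin (d + m))) with hxv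
    have hxmem := x.2
    rw [Submodule.mem_inf] at hxmem
    have hxE : xv ∈ E := hxmem.1
    have hxF : xv ∈ F := hxmem.2
    have hxne : xv ≠ 0 := fun h => hx0 (Subtype.ext h)
    -- coordinates in the second block of `xv` vanish
    have hcoord : ∀ i : Fin m, xv (Fin.natAdd d i) = 0 := by
      have hP : ∀ y ∈ F, ∀ i : Fin m, (y : EuclideanSpace ℝ (Fin (d + m))) (Fin.natAdd d i) = 0 := by
        intro y hy
        refine Submodule.span_induction ?_ ?_ ?_ ?_ hy
        · rintro _ ⟨k, rfl⟩ i
          have hne : (Fin.natAdd d i : Fin (d + m)) ≠ Fin.castAdd m k := by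
            intro h
            have h2 := congrArg Fin.val h
            simp [Fin.coe_natAdd, Fin.coe_castAdd] at h2
            have := k.isLt
            omega
          rw [hbF]
          simp [EuclideanSpace.single_apply, hne]
        · intro i; rfl
        · intro y z _ _ hy hz i
          have : (y + z) (Fin.natAdd d i) = y (Fin.natAdd d i) + z (Fin.natAdd d i) := rfl
          rw [this, hy i, hz i, add_zero]
        · intro c y _ hy i
          have : (c • y) (Fin.natAdd d i) = c • (y (Fin.natAdd d i)) := rfl
          rw [this, hy i, smul_zero]
      exact hP xv hxF
    -- eigen-coordinates of `xv` are supported in `K`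
    set c : Fin (d + m) → ℝ := fun k => (inner ℝ (u k) xv : ℝ) with hc
    have hsupp : ∀ k, k ∉ K → c k = 0 := by
      intro k hk
      have hmem : xv ∈ Submodule.span ℝ (⇑u.toBasis '' (K : Set (Fin (d + m)))) := by
        rw [u.coe_toBasis]
        exact hxE
      have hss := Module.Basis.repr_support_subset_of_mem_span u.toBasis (K : Set (Fin (d + m))) hmem
      by_contra hcne
      have hk' : k ∈ (u.toBasis.repr xv).support := by
        rw [Finsupp.mem_support_iff, u.coe_toBasis_repr_apply, u.repr_apply_apply]
        exact hcne
      exact hk (by simpa using hss hk')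
    have hex : ∃ k, c k ≠ 0 := by
      by_contra hall
      push_neg at hall
      apply hxne
      have h0 : u.repr xv = 0 := by
        ext k
        simpa [u.repr_apply_apply] using hall k
      have := u.repr.map_eq_zero_iff.mp h0
      exact this
    obtain ⟨k₀, hk₀⟩ := hex
    have hk₀K : k₀ ∈ K := by
      by_contra h
      exact hk₀ (hsupp _ h)
    -- `y = M x`
    set y : EuclideanSpace ℝ (Fin (d + m)) := WithLp.toLp 2 (M.mulVec xv) with hy
    have hinner_y : ∀ k, (inner ℝ (u k) y : ℝ) = a k * c k := by
      intro k
      rw [hdot k y]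
      show dotProduct (fun i => u k i) (M.mulVec xv) = a k * c k
      rw [Matrix.dotProduct_mulVec]
      have h2 : Matrix.vecMul (fun i => u k i) M = M.mulVec (fun i => u k i) := by
        rw [← Matrix.mulVec_transpose, hMT]
      rw [h2]
      have h3 : M.mulVec (fun i => u k i) = a k • (fun i => u k i) :=
        hH.mulVec_eigenvectorBasis k
      rw [h3, smul_dotProduct, smul_eq_mul]
      exact congrArg (fun t => a k * t) (hdot k xv).symm
    have hy2 : ‖y‖ ^ 2 = ∑ k, (a k * c k) ^ 2 := by
      rw [parseval u y]
      exact Finset.sum_congr rfl fun k _ => by rw [hinner_y k]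
    have hx2 : ‖xv‖ ^ 2 = ∑ k, (c k) ^ 2 := parseval u xv
    -- lower bound
    have hbig : ∀ k ∈ K, T < |a k| := fun k hk => (Finset.mem_filter.mp hk).2
    have hlow : T ^ 2 * ‖xv‖ ^ 2 < ‖y‖ ^ 2 := by
      rw [hy2, hx2]
      exact sum_sq_lt a c T hT0 K hsupp hbig k₀ hk₀
    -- upper bound
    have hyc : ∀ i, |y i| ≤ (d : ℝ) * δ * ‖xv‖ := by
      intro i
      have hexp : y i = ∑ k : Fin d, M i (Fin.castAdd m k) * xv (Fin.castAdd m k) := by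
        show (M.mulVec xv) i = _
        rw [Matrix.mulVec, dotProduct, Fin.sum_univ_add]
        have hz : ∀ k : Fin m, M i (Fin.natAdd d k) * xv (Fin.natAdd d k) = 0 := by
          intro k
          rw [hcoord k, mul_zero]
        rw [Finset.sum_congr rfl fun k _ => hz k]
        simp
      rw [hexp]
      calc |∑ k : Fin d, M i (Fin.castAdd m k) * xv (Fin.castAdd m k)|
          ≤ ∑ k : Fin d, |M i (Fin.castAdd m k) * xv (Fin.castAdd m k)| :=
            Finset.abs_sum_le_sum_abs _ _
        _ ≤ ∑ _k : Fin d, δ * ‖xv‖ := by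
            apply Finset.sum_le_sum
            intro k _
            rw [abs_mul]
            exact mul_le_mul (hcol i k) (abs_coord_le_norm xv _) (abs_nonneg _)
              (le_trans (abs_nonneg _) (hcol i k))
        _ = (d : ℝ) * δ * ‖xv‖ := by
            rw [Finset.sum_const, Finset.card_univ, Fintype.card_fin, nsmul_eq_mul]
            ring
    have hup : ‖y‖ ^ 2 ≤ ((d : ℝ) + m) * ((d : ℝ) * δ * ‖xv‖) ^ 2 := by
      rw [euclid_norm_sq]
      calc ∑ i, (y i) ^ 2 ≤ ∑ _i : Fin (d + m), ((d : ℝ) * δ * ‖xv‖) ^ 2 := by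
            apply Finset.sum_le_sum
            intro i _
            have := hyc i
            nlinarith [abs_nonneg (y i), sq_abs (y i)]
        _ = ((d : ℝ) + m) * ((d : ℝ) * δ * ‖xv‖) ^ 2 := by
            rw [Finset.sum_const, Finset.card_univ, Fintype.card_fin, nsmul_eq_mul]
            push_cast
            ring
    have h1d : (1 : ℝ) ≤ (d : ℝ) + m := by
      have h1 : (1 : ℝ) ≤ (d : ℝ) := by exact_mod_cast hd
      have h2 : (0 : ℝ) ≤ (m : ℝ) := Nat.cast_nonneg m
      linarith
    have hTle : ((d : ℝ) + m) * ((d : ℝ) * δ * ‖xv‖) ^ 2 ≤ T ^ 2 * ‖xv‖ ^ 2 := by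
      rw [hT]
      nlinarith [mul_nonneg (mul_nonneg (sq_nonneg ((d : ℝ) * δ * ‖xv‖))
        (sub_nonneg.mpr h1d)) (le_trans zero_le_one h1d)]
    linarith
  -- extraction of `d` small eigenvalues
  have hcompl : d ≤ Kᶜ.card := by
    have h1 := Finset.card_compl K
    rw [Fintype.card_fin] at h1
    omega
  obtain ⟨s, hs, hscard⟩ := Finset.exists_subset_card_eq hcompl
  set g := s.orderIsoOfFin hscard with hg
  have hginj : Function.Injective (fun i : Fin d => ((g i : Fin (d + m)))) := by
    intro i j hij
    exact g.injective (Subtype.ext hij)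
  refine ⟨fun i => ⇑(u ((g i : Fin (d + m)))), fun i => a ((g i : Fin (d + m))), ?_, ?_, ?_⟩
  · exact (u.orthonormal.linearIndependent.comp _ hginj).map'
      (WithLp.linearEquiv 2 ℝ (Fin (d + m) → ℝ)).toLinearMap (LinearEquiv.ker _)
  · intro i
    exact hH.mulVec_eigenvectorBasis _
  · intro i
    have hmem : ((g i : Fin (d + m))) ∈ Kᶜ := hs (g i).2
    rw [Finset.mem_compl, hK, Finset.mem_filter] at hmem
    push_neg at hmem
    exact hmem (Finset.mem_univ _)

private lemma grad_diffAt {N : ℕ} {S : (Fin N → ℝ) → ℝ} {U : Set (Fin N → ℝ)} (hU : IsOpen U)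
    {θ₀ : Fin N → ℝ} (hθ : θ₀ ∈ U) (hS : ContDiffOn ℝ 2 S U) :
    DifferentiableAt ℝ (gradV S) θ₀ := by
  have h1 : ContDiffOn ℝ 1 (fderiv ℝ S) U := hS.fderiv_of_isOpen hU (by norm_num)
  have h2 : DifferentiableAt ℝ (fderiv ℝ S) θ₀ :=
    (h1.differentiableOn (by norm_num)).differentiableAt (hU.mem_nhds hθ)
  set L : ((Fin N → ℝ) →L[ℝ] ℝ) →L[ℝ] (Fin N → ℝ) :=
    ContinuousLinearMap.pi (fun j : Fin N =>
      ContinuousLinearMap.apply ℝ ℝ (Pi.single j (1 : ℝ) : Fin N → ℝ)) with hL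
  have hgrad : gradV S = fun θ => L (fderiv ℝ S θ) := by
    funext θ
    funext j
    rfl
  rw [hgrad]
  exact L.differentiableAt.comp θ₀ h2

private lemma fderiv_bound_of_iter {N : ℕ} {D : (Fin N → ℝ) → (Fin N → ℝ)}
    {U : Set (Fin N → ℝ)} (hU : IsOpen U) {θ₀ : Fin N → ℝ} (hθ : θ₀ ∈ U)
    {c : ℝ} (hb : ‖iteratedFDerivWithin ℝ 1 D U θ₀‖ ≤ c)
    (w : Fin N → ℝ) : ‖fderiv ℝ D θ₀ w‖ ≤ c * ‖w‖ := by
  have hu : UniqueDiffWithinAt ℝ U θ₀ := hU.uniqueDiffWithinAt hθ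
  have h1 : fderivWithin ℝ D U θ₀ = fderiv ℝ D θ₀ := fderivWithin_of_isOpen hU hθ
  have h2 : iteratedFDerivWithin ℝ 1 D U θ₀ ![w] = fderivWithin ℝ D U θ₀ w := by
    rw [iteratedFDerivWithin_one_apply hu]
    congr
  calc ‖fderiv ℝ D θ₀ w‖ = ‖iteratedFDerivWithin ℝ 1 D U θ₀ ![w]‖ := by rw [h2, h1]
    _ ≤ ‖iteratedFDerivWithin ℝ 1 D U θ₀‖ * ∏ i, ‖(![w] : Fin 1 → (Fin N → ℝ)) i‖ :=
        (iteratedFDerivWithin ℝ 1 D U θ₀).le_opNorm _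
    _ = ‖iteratedFDerivWithin ℝ 1 D U θ₀‖ * ‖w‖ := by simp
    _ ≤ c * ‖w‖ := mul_le_mul_of_nonneg_right hb (norm_nonneg w)

private lemma fderiv_comp_proj {N : ℕ} {D : (Fin N → ℝ) → (Fin N → ℝ)} {θ₀ : Fin N → ℝ}
    (hD : DifferentiableAt ℝ D θ₀) (j : Fin N) (w : Fin N → ℝ) :
    fderiv ℝ (fun θ => D θ j) θ₀ w = fderiv ℝ D θ₀ w j := by
  have h : HasFDerivAt (fun θ => D θ j)
      ((ContinuousLinearMap.proj (R := ℝ) (φ := fun _ : Fin N => ℝ) j).comp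
        (fderiv ℝ D θ₀)) θ₀ :=
    (ContinuousLinearMap.proj (R := ℝ) (φ := fun _ : Fin N => ℝ) j).hasFDerivAt.comp θ₀
      hD.hasFDerivAt
  rw [h.fderiv]
  rfl

end Aux

set_option maxHeartbeats 2000000 in
/-- **Theorem 2.6 (splitting estimates for the model Hamiltonian).**
Under assumptions (A.1), (A.2), (A.3), at least `d` of the splitting angles
(eigenvalues of the splitting matrix) are bounded by `C μ`. -/
theorem splitting_model (d m : ℕ) (hd : 1 ≤ d) (hm : 1 ≤ m) (C₀ : ℝ) (hC₀ : 0 < C₀) :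
    ∃ C : ℝ, 0 < C ∧
      ∀ (ε : ℝ), 0 < ε →
      ∀ (ϖ : Fin d → ℝ),
        (∀ q : Fin d → ℤ, q ≠ 0 → ∑ i, (q i : ℝ) * ϖ i ≠ 0) →
      ∀ (A : Matrix (Fin d) (Fin d) ℝ) (B : Matrix (Fin m) (Fin m) ℝ),
        A.IsSymm → B.IsSymm → (B.PosDef ∨ (-B).PosDef) →
      ∀ V : (Fin m → ℝ) → ℝ, PeriodicThetaV V → ContDiff ℝ 2 V →
        (∀ i : ℕ, i ≤ 2 → ∀ θ₂, ‖iteratedFDeriv ℝ i V θ₂‖ ≤ 1) →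
        (∃ θm : Fin m → ℝ, (∀ θ₂, V θ₂ ≤ V θm) ∧
          ∀ w : Fin m → ℝ, w ≠ 0 → iteratedFDeriv ℝ 2 V θm ![w, w] < 0) →
      ∀ (Fp Rp : Phase (d + m) → ℝ), PeriodicTheta Fp → PeriodicTheta Rp →
        CkNormLE 2 Fp (Dom (d + m) 1) C₀ → CkNormLE 2 Rp (Dom (d + m) 1) C₀ →
        (∀ θ θ' I, (∀ i : Fin m, θ (Fin.natAdd d i) = θ' (Fin.natAdd d i)) →
          Rp (θ, I) = Rp (θ', I)) →
      ∀ (lam₀ c₀ : ℝ), 0 < lam₀ → 0 < c₀ →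
      ∀ (Sp Sm : ℝ → ℝ → (Fin (d + m) → ℝ) → ℝ)
        (Up Um : Set (Fin (d + m) → ℝ))
        (θhom : ℝ → ℝ → (Fin (d + m) → ℝ)),
        IsOpen Up → IsOpen Um → Up.Nonempty → Um.Nonempty →
        (∀ lam mu : ℝ, 0 ≤ lam → lam ≤ lam₀ → 0 ≤ mu → mu ≤ c₀ * lam →
          -- (A.2): generating functions of the invariant Lagrangian graphs
          (ContDiffOn ℝ 2 (Sp lam mu) Up ∧ ContDiffOn ℝ 2 (Sm lam mu) Um) ∧
          -- (i) the graphs are invariant: the Hamiltonian is constant on them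
          (∀ θ ∈ Up, ∀ θ' ∈ Up,
            hamSplit d m ε ϖ A B V Rp Fp lam mu (θ, gradV (Sp lam mu) θ) =
              hamSplit d m ε ϖ A B V Rp Fp lam mu (θ', gradV (Sp lam mu) θ')) ∧
          (∀ θ ∈ Um, ∀ θ' ∈ Um,
            hamSplit d m ε ϖ A B V Rp Fp lam mu (θ, gradV (Sm lam mu) θ) =
              hamSplit d m ε ϖ A B V Rp Fp lam mu (θ', gradV (Sm lam mu) θ')) ∧
          -- (ii) for `μ = 0` the graphs lie in `{I₁ = 0}`
          (∀ θ ∈ Up, ∀ i : Fin d, gradV (Sp lam 0) θ (Fin.castAdd m i) = 0) ∧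
          (∀ θ ∈ Um, ∀ i : Fin d, gradV (Sm lam 0) θ (Fin.castAdd m i) = 0) ∧
          -- (iii) the graphs are `μ`-close to the unperturbed ones in `C¹`
          DerivBoundsOn 1 (fun θ => gradV (Sp lam mu) θ - gradV (Sp lam 0) θ) Up (C₀ * mu) ∧
          DerivBoundsOn 1 (fun θ => gradV (Sm lam mu) θ - gradV (Sm lam 0) θ) Um (C₀ * mu) ∧
          -- (A.3)/(iv): a homoclinic point
          θhom lam mu ∈ Up ∩ Um ∧
          gradV (Sp lam mu) (θhom lam mu) = gradV (Sm lam mu) (θhom lam mu)) →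
        ∀ lam mu : ℝ, 0 ≤ lam → lam ≤ lam₀ → 0 ≤ mu → mu ≤ c₀ * lam →
          ∃ (v : Fin d → (Fin (d + m) → ℝ)) (a : Fin d → ℝ),
            LinearIndependent ℝ v ∧
            (∀ i, (splitMat (Sp lam mu) (Sm lam mu) (θhom lam mu)).mulVec (v i) =
              a i • v i) ∧
            ∀ i, |a i| ≤ C * mu := by
  refine ⟨2 * C₀ * ((d : ℝ) + m) * d + 1, ?_, ?_⟩
  · have h1 : (0 : ℝ) ≤ 2 * C₀ * ((d : ℝ) + m) * d := by
      apply mul_nonneg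
      apply mul_nonneg
      · linarith
      · positivity
      · positivity
    linarith
  intro ε hε ϖ hϖ A B hA hB hBdef V hV1 hV2 hV3 hV4 Fp Rp hFp hRp hFn hRn hRth
    lam₀ c₀ hlam₀ hc₀ Sp Sm Up Um θhom hUpo hUmo hUpne hUmne hyp lam mu hlam0 hlam1 hmu0 hmu1
  have hmu0' : (0 : ℝ) ≤ c₀ * lam := mul_nonneg hc₀.le hlam0
  obtain ⟨⟨hSp1, hSm1⟩, _, _, hii_p, hii_m, hiii_p, hiii_m, hhom, _⟩ :=
    hyp lam mu hlam0 hlam1 hmu0 hmu1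
  obtain ⟨⟨hSp0, hSm0⟩, _⟩ := hyp lam 0 hlam0 hlam1 le_rfl hmu0'
  set θ₀ := θhom lam mu with hθ₀def
  have hθp : θ₀ ∈ Up := hhom.1
  have hθm : θ₀ ∈ Um := hhom.2
  set U : Set (Fin (d + m) → ℝ) := Up ∩ Um with hUdef
  have hUo : IsOpen U := hUpo.inter hUmo
  have hθU : θ₀ ∈ U := ⟨hθp, hθm⟩
  -- the function and its derivatives
  set f : (Fin (d + m) → ℝ) → ℝ := fun θ => Sp lam mu θ - Sm lam mu θ with hfdef
  have hfC : ContDiffOn ℝ 2 f U :=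
    (hSp1.mono Set.inter_subset_left).sub (hSm1.mono Set.inter_subset_right)
  set f' : (Fin (d + m) → ℝ) → ((Fin (d + m) → ℝ) →L[ℝ] ℝ) := fderiv ℝ f with hf'def
  have hf'C : ContDiffOn ℝ 1 f' U := hfC.fderiv_of_isOpen hUo (by norm_num)
  have hf'd : DifferentiableAt ℝ f' θ₀ :=
    (hf'C.differentiableOn (by norm_num)).differentiableAt (hUo.mem_nhds hθU)
  set f'' : (Fin (d + m) → ℝ) →L[ℝ] ((Fin (d + m) → ℝ) →L[ℝ] ℝ) := fderiv ℝ f' θ₀ with hf''def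
  have hev : ∀ᶠ y in 𝓝 θ₀, HasFDerivAt f (f' y) y := by
    filter_upwards [hUo.mem_nhds hθU] with y hy
    exact ((hfC.differentiableOn (by norm_num)).differentiableAt (hUo.mem_nhds hy)).hasFDerivAt
  have hsymm2 : ∀ v w, f'' v w = f'' w v := fun v w =>
    second_derivative_symmetric_of_eventually hev hf'd.hasFDerivAt v w
  set M := splitMat (Sp lam mu) (Sm lam mu) θ₀ with hMdef
  have hM0 : ∀ i j : Fin (d + m),
      M i j = fderiv ℝ (fun θ => f' θ (Pi.single j 1)) θ₀ (Pi.single i 1) := fun i j => rfl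
  have hMeq : ∀ i j : Fin (d + m), M i j = f'' (Pi.single i 1) (Pi.single j 1) := by
    intro i j
    have hcomp : HasFDerivAt (fun θ => f' θ (Pi.single j 1))
        ((ContinuousLinearMap.apply ℝ ℝ (Pi.single j (1 : ℝ) : Fin (d + m) → ℝ)).comp f'') θ₀ :=
      (ContinuousLinearMap.apply ℝ ℝ (Pi.single j (1 : ℝ) : Fin (d + m) → ℝ)).hasFDerivAt.comp
        θ₀ hf'd.hasFDerivAt
    rw [hM0 i j, hcomp.fderiv]
    rfl
  have hMsym : ∀ i j, M i j = M j i := by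
    intro i j
    rw [hMeq i j, hMeq j i, hsymm2]
  -- differentiability of the gradients
  have hgp1 : DifferentiableAt ℝ (gradV (Sp lam mu)) θ₀ := grad_diffAt hUpo hθp hSp1
  have hgp0 : DifferentiableAt ℝ (gradV (Sp lam 0)) θ₀ := grad_diffAt hUpo hθp hSp0
  have hgm1 : DifferentiableAt ℝ (gradV (Sm lam mu)) θ₀ := grad_diffAt hUmo hθm hSm1
  have hgm0 : DifferentiableAt ℝ (gradV (Sm lam 0)) θ₀ := grad_diffAt hUmo hθm hSm0
  have hDp : DifferentiableAt ℝ (fun θ => gradV (Sp lam mu) θ - gradV (Sp lam 0) θ) θ₀ :=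
    hgp1.sub hgp0
  have hDm : DifferentiableAt ℝ (fun θ => gradV (Sm lam mu) θ - gradV (Sm lam 0) θ) θ₀ :=
    hgm1.sub hgm0
  -- entry bound on the first block of columns
  have hcol : ∀ (i : Fin (d + m)) (k : Fin d),
      |M i (Fin.castAdd m k)| ≤ 2 * (C₀ * mu) := by
    intro i k
    have heq : (fun θ => f' θ (Pi.single (Fin.castAdd m k) 1)) =ᶠ[𝓝 θ₀]
        (fun θ => (gradV (Sp lam mu) θ - gradV (Sp lam 0) θ) (Fin.castAdd m k)
          - (gradV (Sm lam mu) θ - gradV (Sm lam 0) θ) (Fin.castAdd m k)) := by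
      filter_upwards [hUo.mem_nhds hθU] with θ hθ
      have hp1 : DifferentiableAt ℝ (Sp lam mu) θ :=
        (hSp1.differentiableOn (by norm_num)).differentiableAt (hUpo.mem_nhds hθ.1)
      have hm1 : DifferentiableAt ℝ (Sm lam mu) θ :=
        (hSm1.differentiableOn (by norm_num)).differentiableAt (hUmo.mem_nhds hθ.2)
      have hsub : f' θ = fderiv ℝ (Sp lam mu) θ - fderiv ℝ (Sm lam mu) θ := by
        rw [hf'def, hfdef]
        exact fderiv_sub hp1 hm1
      have hz1 : gradV (Sp lam 0) θ (Fin.castAdd m k) = 0 := hii_p θ hθ.1 k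
      have hz2 : gradV (Sm lam 0) θ (Fin.castAdd m k) = 0 := hii_m θ hθ.2 k
      rw [hsub]
      simp only [ContinuousLinearMap.sub_apply, Pi.sub_apply]
      rw [hz1, hz2]
      show fderiv ℝ (Sp lam mu) θ (Pi.single (Fin.castAdd m k) 1)
          - fderiv ℝ (Sm lam mu) θ (Pi.single (Fin.castAdd m k) 1)
        = (gradV (Sp lam mu) θ (Fin.castAdd m k) - 0)
          - (gradV (Sm lam mu) θ (Fin.castAdd m k) - 0)
      simp [gradV]
    have hDpj : DifferentiableAt ℝ
        (fun θ => (gradV (Sp lam mu) θ - gradV (Sp lam 0) θ) (Fin.castAdd m k)) θ₀ :=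
      (ContinuousLinearMap.proj (R := ℝ) (φ := fun _ : Fin (d + m) => ℝ)
        (Fin.castAdd m k)).differentiableAt.comp θ₀ hDp
    have hDmj : DifferentiableAt ℝ
        (fun θ => (gradV (Sm lam mu) θ - gradV (Sm lam 0) θ) (Fin.castAdd m k)) θ₀ :=
      (ContinuousLinearMap.proj (R := ℝ) (φ := fun _ : Fin (d + m) => ℝ)
        (Fin.castAdd m k)).differentiableAt.comp θ₀ hDm
    have hM1 : M i (Fin.castAdd m k) =
        fderiv ℝ (fun θ => (gradV (Sp lam mu) θ - gradV (Sp lam 0) θ) (Fin.castAdd m k)) θ₀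
            (Pi.single i 1)
        - fderiv ℝ (fun θ => (gradV (Sm lam mu) θ - gradV (Sm lam 0) θ) (Fin.castAdd m k)) θ₀
            (Pi.single i 1) := by
      rw [hM0 i (Fin.castAdd m k), heq.fderiv_eq, fderiv_fun_sub hDpj hDmj]
      rfl
    have hb1 : |fderiv ℝ
        (fun θ => (gradV (Sp lam mu) θ - gradV (Sp lam 0) θ) (Fin.castAdd m k)) θ₀
          (Pi.single i 1)| ≤ C₀ * mu := by
      rw [fderiv_comp_proj hDp]
      have hbd := fderiv_bound_of_iter hUpo hθp (hiii_p 1 le_rfl θ₀ hθp)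
        (Pi.single i (1 : ℝ) : Fin (d + m) → ℝ)
      calc |fderiv ℝ (fun θ => gradV (Sp lam mu) θ - gradV (Sp lam 0) θ) θ₀
              (Pi.single i 1) (Fin.castAdd m k)|
          ≤ ‖fderiv ℝ (fun θ => gradV (Sp lam mu) θ - gradV (Sp lam 0) θ) θ₀
              (Pi.single i 1)‖ := by
            simpa [Real.norm_eq_abs] using
              norm_le_pi_norm (fderiv ℝ (fun θ => gradV (Sp lam mu) θ - gradV (Sp lam 0) θ) θ₀
                (Pi.single i 1)) (Fin.castAdd m k)
        _ ≤ C₀ * mu * ‖(Pi.single i (1 : ℝ) : Fin (d + m) → ℝ)‖ := hbd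
        _ = C₀ * mu := by
            rw [Pi.norm_single]
            simp
    have hb2 : |fderiv ℝ
        (fun θ => (gradV (Sm lam mu) θ - gradV (Sm lam 0) θ) (Fin.castAdd m k)) θ₀
          (Pi.single i 1)| ≤ C₀ * mu := by
      rw [fderiv_comp_proj hDm]
      have hbd := fderiv_bound_of_iter hUmo hθm (hiii_m 1 le_rfl θ₀ hθm)
        (Pi.single i (1 : ℝ) : Fin (d + m) → ℝ)
      calc |fderiv ℝ (fun θ => gradV (Sm lam mu) θ - gradV (Sm lam 0) θ) θ₀
              (Pi.single i 1) (Fin.castAdd m k)|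
          ≤ ‖fderiv ℝ (fun θ => gradV (Sm lam mu) θ - gradV (Sm lam 0) θ) θ₀
              (Pi.single i 1)‖ := by
            simpa [Real.norm_eq_abs] using
              norm_le_pi_norm (fderiv ℝ (fun θ => gradV (Sm lam mu) θ - gradV (Sm lam 0) θ) θ₀
                (Pi.single i 1)) (Fin.castAdd m k)
        _ ≤ C₀ * mu * ‖(Pi.single i (1 : ℝ) : Fin (d + m) → ℝ)‖ := hbd
        _ = C₀ * mu := by
            rw [Pi.norm_single]
            simp
    rw [hM1]
    exact (abs_sub _ _).trans (by linarith)
  -- apply the linear algebra lemma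
  have hδ0 : (0 : ℝ) ≤ 2 * (C₀ * mu) := by positivity
  obtain ⟨v, a, hli, heig, hbound⟩ := exists_small_eigen hd M (2 * (C₀ * mu)) hδ0 hMsym hcol
  refine ⟨v, a, hli, heig, ?_⟩
  intro i
  calc |a i| ≤ ((d : ℝ) + m) * d * (2 * (C₀ * mu)) := hbound i
    _ ≤ (2 * C₀ * ((d : ℝ) + m) * d + 1) * mu := by nlinarith [hmu0]

end NFpaper
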